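/- (Property 1) Let C be an initial configuration of the BRP and let b be a block that is badly placed in C. Then every feasible move sequence for C contains at least one BG relocation of b; that is, f_BG({b}) ≥ 1. -/

import Mathlib

/-- A configuration of the BRP: each stack holds a list of blocks, bottom to top. -/
abbrev Config (B S : ℕ) := Fin S → List (Fin B)

/-- Every block occurs exactly once among the stacks. -/
def IsConfig {B S : ℕ} (C : Config B S) : Prop :=
  ∀ b : Fin B, (∑ s : Fin S, (C s).count b) = 1

/-- `a` lies strictly below `b` in stack `s` of `C`. -/
def StrictlyBelow {B S : ℕ} (C : Config B S) (s : Fin S) (a b : Fin B) : Prop :=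
  ∃ i j : ℕ, i < j ∧ (C s)[i]? = some a ∧ (C s)[j]? = some b

/-- A block is badly placed if some smaller-labelled block lies below it in its stack. -/
def BadlyPlaced {B S : ℕ} (C : Config B S) (b : Fin B) : Prop :=
  ∃ s a, a < b ∧ StrictlyBelow C s a b

/-- Moves: retrieve the top block of a stack, or relocate the top block of one
stack onto another stack. -/
inductive Move (S : ℕ) where
  | retrieve (s : Fin S)
  | relocate (src dst : Fin S)

def applyMove {B S : ℕ} (C : Config B S) : Move S → Config B S
  | .retrieve s => Function.update C s (C s).dropLast
  | .relocate src dst =>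
    match (C src).getLast? with
    | some b =>
      let C' := Function.update C src (C src).dropLast
      Function.update C' dst (C' dst ++ [b])
    | none => C

def Enabled {B S : ℕ} (C : Config B S) : Move S → Prop
  | .retrieve s => ∃ b, (C s).getLast? = some b ∧ ∀ (s' : Fin S), ∀ b' ∈ C s', b ≤ b'
  | .relocate src dst => src ≠ dst ∧ C src ≠ []

def play {B S : ℕ} (C : Config B S) : List (Move S) → Config B S
  | [] => C
  | m :: ms => play (applyMove C m) ms

def AllEnabled {B S : ℕ} (C : Config B S) : List (Move S) → Prop
  | [] => True
  | m :: ms => Enabled C m ∧ AllEnabled (applyMove C m) ms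

/-- A feasible move sequence: every move is enabled and at the end all blocks
have been retrieved. -/
def Feasible {B S : ℕ} (C : Config B S) (ms : List (Move S)) : Prop :=
  AllEnabled C ms ∧ ∀ s, play C ms s = []

/-- `b` is the block moved by `m` (a relocation) performed in configuration `C`. -/
def MovedBlock {B S : ℕ} (C : Config B S) (m : Move S) (b : Fin B) : Prop :=
  ∃ src dst, m = .relocate src dst ∧ src ≠ dst ∧ (C src).getLast? = some b

/-- The four types of relocation moves. -/
inductive MType where
  | BB | BG | GB | GG

/-- The relocation `m`, moving block `b` from configuration `C`, has the given type. -/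
def MTypeOf {B S : ℕ} (C : Config B S) (m : Move S) (b : Fin B) : MType → Prop
  | .BB => BadlyPlaced C b ∧ BadlyPlaced (applyMove C m) b
  | .BG => BadlyPlaced C b ∧ ¬ BadlyPlaced (applyMove C m) b
  | .GB => ¬ BadlyPlaced C b ∧ BadlyPlaced (applyMove C m) b
  | .GG => ¬ BadlyPlaced C b ∧ ¬ BadlyPlaced (applyMove C m) b

/-- `m` is a relocation of a block of `𝔅`. -/
def RelocIn {B S : ℕ} (𝔅 : Set (Fin B)) (C : Config B S) (m : Move S) : Prop :=
  ∃ b ∈ 𝔅, MovedBlock C m b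

/-- `m` is a relocation of a block of `𝔅` of type `mt`. -/
def RelocTypeIn {B S : ℕ} (mt : MType) (𝔅 : Set (Fin B)) (C : Config B S) (m : Move S) : Prop :=
  ∃ b ∈ 𝔅, MovedBlock C m b ∧ MTypeOf C m b mt

/-- `m` is a non-BG relocation of a block of `𝔅`. -/
def RelocNonBGIn {B S : ℕ} (𝔅 : Set (Fin B)) (C : Config B S) (m : Move S) : Prop :=
  ∃ b ∈ 𝔅, MovedBlock C m b ∧ ¬ MTypeOf C m b MType.BG

/-- Count the moves of a sequence satisfying `P` (evaluated in the configuration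
in which each move is performed). -/
noncomputable def countMoves {B S : ℕ} (P : Config B S → Move S → Prop) :
    Config B S → List (Move S) → ℕ
  | _, [] => 0
  | C, m :: ms =>
    (@ite ℕ (P C m) (Classical.propDecidable _) 1 0) + countMoves P (applyMove C m) ms

/-- Minimum over feasible move sequences of the number of moves satisfying `P`. -/
noncomputable def fMin {B S : ℕ} (C : Config B S) (P : Config B S → Move S → Prop) : ℕ :=
  sInf { n | ∃ ms, Feasible C ms ∧ countMoves P C ms = n }

/-- `f(𝔅)`: least number of relocations applied to blocks of `𝔅`. -/
noncomputable def fRel {B S : ℕ} (C : Config B S) (𝔅 : Set (Fin B)) : ℕ :=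
  fMin C (RelocIn 𝔅)

/-- `f_mt(𝔅)`: least number of type-`mt` relocations applied to blocks of `𝔅`. -/
noncomputable def fTyp {B S : ℕ} (C : Config B S) (mt : MType) (𝔅 : Set (Fin B)) : ℕ :=
  fMin C (RelocTypeIn mt 𝔅)

/-- `f_nonBG(𝔅)`: least number of non-BG relocations applied to blocks of `𝔅`. -/
noncomputable def fNonBG {B S : ℕ} (C : Config B S) (𝔅 : Set (Fin B)) : ℕ :=
  fMin C (RelocNonBGIn 𝔅)

/-- The top 1st layer: the topmost block of each stack. -/
def TopLayer {B S : ℕ} (C : Config B S) : Set (Fin B) :=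
  {b | ∃ s, (C s).getLast? = some b}

/-- The top `k` layers: the topmost `k` blocks of every stack. -/
def TopK {B S : ℕ} (C : Config B S) (k : ℕ) : Set (Fin B) :=
  {b | ∃ s, b ∈ (C s).drop ((C s).length - k)}

/-- The top `j`-th layer: the `j`-th block from the top of every stack. -/
def TopJth {B S : ℕ} (C : Config B S) (j : ℕ) : Set (Fin B) :=
  {b | ∃ s, (C s)[(C s).length - j]? = some b}

/-- A virtual layer: a set of blocks containing exactly one block from each stack. -/
def VirtualLayer {B S : ℕ} (C : Config B S) (V : Set (Fin B)) : Prop :=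
  ∀ s : Fin S, ∃! b : Fin B, b ∈ V ∧ b ∈ C s

/-- `a` lies at or below the `V`-block of stack `s`. -/
def AtOrBelowLayer {B S : ℕ} (C : Config B S) (V : Set (Fin B)) (s : Fin S) (a : Fin B) : Prop :=
  ∃ b j, b ∈ V ∧ (C s)[j]? = some b ∧ a ∈ (C s).take (j + 1)

/-- `V` is a virtual layer satisfying the conditions of Property 5:
(1) in some stack, a block strictly below the `V`-block of that stack has a smaller
label than every block of `V`; (2) every badly placed block of `V` has a label
strictly greater than the minimum label present in stack `s` after deleting all
blocks strictly above the `V`-block of `s`, for every stack `s`. -/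
def P5 {B S : ℕ} (C : Config B S) (V : Set (Fin B)) : Prop :=
  VirtualLayer C V ∧
  (∃ s a b, b ∈ V ∧ StrictlyBelow C s a b ∧ ∀ c ∈ V, a < c) ∧
  (∀ b ∈ V, BadlyPlaced C b → ∀ s : Fin S, ∃ a, AtOrBelowLayer C V s a ∧ a < b)

/-- A pair of virtual layers `V₁` (upper), `V₂` (lower) with shared well-placed
block `bstar` satisfying the conditions of Property 7. -/
def P7 {B S : ℕ} (C : Config B S) (V₁ V₂ : Set (Fin B)) (bstar : Fin B) : Prop :=
  V₁ ∩ V₂ = {bstar} ∧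
  ¬ BadlyPlaced C bstar ∧
  (∀ s : Fin S, bstar ∉ C s →
    ∃ b₁ b₂, b₁ ∈ V₁ ∧ b₂ ∈ V₂ ∧ StrictlyBelow C s b₂ b₁) ∧
  P5 C V₁ ∧ P5 C V₂ ∧
  (∀ s : Fin S, ∃ a, AtOrBelowLayer C V₁ s a ∧ a ≤ bstar) ∧
  (∃ s : Fin S, ∀ a, AtOrBelowLayer C V₁ s a → bstar ≤ a)

/-- Push blocks one by one onto the indicated stacks. -/
def pushAll {B S : ℕ} (C : Config B S) : List (Fin B × Fin S) → Config B S
  | [] => C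
  | p :: rest => pushAll (Function.update C p.2 (C p.2 ++ [p.1])) rest

/-- The blocks lying strictly above position `i` of stack `s`, listed from the
top of the stack downward (the processing order of the experiment). -/
def aboveList {B S : ℕ} (C : Config B S) (s : Fin S) (i : ℕ) : List (Fin B) :=
  ((C s).drop (i + 1)).reverse

/-- The arrangement resulting from the experiment of Property 4: the blocks above
position `i` of stack `s` are relocated exactly once, from the top downward, onto
the stacks listed in `ds`. -/
def expResult {B S : ℕ} (C : Config B S) (s : Fin S) (i : ℕ) (ds : List (Fin S)) :
    Config B S :=
  pushAll (Function.update C s ((C s).take (i + 1))) ((aboveList C s i).zip ds)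

/-- The condition of Property 4 (target block at position `i` of stack `sStar`):
in every experiment, some relocated block ends badly placed. -/
def P4Cond {B S : ℕ} (C : Config B S) (sStar : Fin S) (i : ℕ) : Prop :=
  ∀ ds : List (Fin S), ds.length = (aboveList C sStar i).length →
    (∀ d ∈ ds, d ≠ sStar) →
    ∃ b ∈ aboveList C sStar i, BadlyPlaced (expResult C sStar i ds) b

/-- The set `𝔅⁴`: the blocks above the target block together with, for each
nonempty stack other than the target's stack, its block of minimum label. -/
def B4Set {B S : ℕ} (C : Config B S) (sStar : Fin S) (i : ℕ) : Set (Fin B) :=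
  {b | b ∈ aboveList C sStar i} ∪
  {b | ∃ s, s ≠ sStar ∧ b ∈ C s ∧ ∀ b' ∈ C s, b ≤ b'}

/-- The number of direct blockages: adjacent pairs in a stack whose upper block
has a strictly larger label. -/
def directBlockages {B S : ℕ} (C : Config B S) : ℕ :=
  ∑ s : Fin S, (((C s).zip (C s).tail).filter (fun p => decide (p.1 < p.2))).length

/-- The number of relocations in a move sequence. -/
def relocCount {S : ℕ} (ms : List (Move S)) : ℕ :=
  (ms.filter (fun m => match m with | Move.relocate _ _ => true | Move.retrieve _ => false)).length

/-- The minimum number of relocations over all feasible move sequences. -/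
noncomputable def fAll {B S : ℕ} (C : Config B S) : ℕ :=
  sInf { n | ∃ ms, Feasible C ms ∧ relocCount ms = n }

/-- `g(L)`: `L` plus the minimum number of direct blockages over all partial
plans with exactly `L` relocations. -/
noncomputable def gIter {B S : ℕ} (C : Config B S) (L : ℕ) : ℕ :=
  L + sInf { d | ∃ ms : List (Move S), AllEnabled C ms ∧ relocCount ms = L ∧
      d = directBlockages (play C ms) }

section BRPAux

variable {B S : ℕ}

lemma brp_play_append (C : Config B S) (ms₁ ms₂ : List (Move S)) :
    play C (ms₁ ++ ms₂) = play (play C ms₁) ms₂ := by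
  induction ms₁ generalizing C with
  | nil => rfl
  | cons m ms ih => simpa [play] using ih (applyMove C m)

lemma brp_allEnabled_append {C : Config B S} {ms₁ ms₂ : List (Move S)}
    (h₁ : AllEnabled C ms₁) (h₂ : AllEnabled (play C ms₁) ms₂) :
    AllEnabled C (ms₁ ++ ms₂) := by
  induction ms₁ generalizing C with
  | nil => exact h₂
  | cons m ms ih => exact ⟨h₁.1, ih h₁.2 h₂⟩

lemma brp_sum_update_len (C : Config B S) (s : Fin S) (l : List (Fin B)) :
    (∑ t : Fin S, ((Function.update C s l) t).length) + (C s).length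
      = (∑ t : Fin S, (C t).length) + l.length := by
  rw [Finset.sum_congr rfl (fun t _ => congrArg List.length
        (show Function.update C s l t = Function.update C s l t from rfl))]
  rw [show (fun t => (Function.update C s l t).length)
      = Function.update (fun t => (C t).length) s l.length from
      funext fun t => Function.apply_update (fun _ m => List.length m) C s l t]
  rw [Finset.sum_update_of_mem (Finset.mem_univ s),
      ← Finset.add_sum_erase _ (fun t => (C t).length) (Finset.mem_univ s),
      Finset.sdiff_singleton_eq_erase]
  omega

/-- Inner loop: with `b0` a globally minimal present block sitting in stack `s`,
we can retrieve one block, decreasing the total count by one. -/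
lemma brp_clearAbove (hS : 2 ≤ S) (b0 : Fin B) :
    ∀ (n : ℕ) (C : Config B S) (s : Fin S), (C s).length = n →
    b0 ∈ C s → (∀ s' : Fin S, ∀ b' ∈ C s', b0 ≤ b') →
    ∃ ms : List (Move S), AllEnabled C ms ∧
      (∑ t : Fin S, (play C ms t).length) + 1 = ∑ t : Fin S, (C t).length := by
  intro n
  induction n with
  | zero =>
    intro C s hlen hmem _
    rw [List.length_eq_zero_iff] at hlen
    simp [hlen] at hmem
  | succ n ih =>
    intro C s hlen hmem hmin
    have hne : C s ≠ [] := by intro h; simp [h] at hlen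
    obtain ⟨bt, hbt⟩ := Option.isSome_iff_exists.mp (List.getLast?_isSome.mpr hne)
    have hdl : (C s).dropLast.length = n := by
      simp [hlen]
    by_cases hb : bt = b0
    · -- retrieve
      subst hb
      refine ⟨[Move.retrieve s], ⟨⟨bt, hbt, hmin⟩, trivial⟩, ?_⟩
      have := brp_sum_update_len C s (C s).dropLast
      simp only [play, applyMove]
      omega
    · -- relocate top of s elsewhere
      have hcard : 1 < Fintype.card (Fin S) := by simp; omega
      obtain ⟨t, hts⟩ := Fintype.exists_ne_of_one_lt_card hcard s
      set C₁ := Function.update C s (C s).dropLast with hC₁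
      set C₂ := Function.update C₁ t (C₁ t ++ [bt]) with hC₂
      have happ : applyMove C (Move.relocate s t) = C₂ := by
        simp only [applyMove, hbt]
        rfl
      have hC₂s : C₂ s = (C s).dropLast := by
        rw [hC₂, Function.update_of_ne (Ne.symm hts), hC₁, Function.update_self]
      have hgl : bt = (C s).getLast hne := by
        rw [List.getLast?_eq_getLast hne] at hbt
        exact (Option.some_inj.mp hbt).symm
      have hsplit : (C s).dropLast ++ [bt] = C s := by
        rw [hgl]; exact List.dropLast_append_getLast hne
      have hbtmem : bt ∈ C s := by
        rw [← hsplit]; simp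
      have hmem' : b0 ∈ (C s).dropLast := by
        rw [← hsplit] at hmem
        rcases List.mem_append.mp hmem with h | h
        · exact h
        · simp at h; exact absurd h.symm hb
      have hmem₂ : b0 ∈ C₂ s := by rw [hC₂s]; exact hmem'
      have hmin₂ : ∀ s' : Fin S, ∀ b' ∈ C₂ s', b0 ≤ b' := by
        intro s' b' hb'
        by_cases h1 : s' = t
        · subst h1
          rw [hC₂, Function.update_self, hC₁, Function.update_of_ne hts] at hb'
          rcases List.mem_append.mp hb' with h | h
          · exact hmin _ _ h
          · simp at h; subst h; exact hmin _ _ hbtmem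
        · rw [hC₂, Function.update_of_ne h1, hC₁] at hb'
          by_cases h2 : s' = s
          · subst h2
            rw [Function.update_self] at hb'
            exact hmin _ _ (List.dropLast_subset _ hb')
          · rw [Function.update_of_ne h2] at hb'
            exact hmin _ _ hb'
      obtain ⟨ms', hAE', hsum'⟩ := ih C₂ s (by rw [hC₂s, hdl]) hmem₂ hmin₂
      refine ⟨Move.relocate s t :: ms', ⟨⟨Ne.symm hts, hne⟩, by rw [happ]; exact hAE'⟩, ?_⟩
      have e1 := brp_sum_update_len C₁ t (C₁ t ++ [bt])
      have e2 := brp_sum_update_len C s (C s).dropLast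
      rw [← hC₂] at e1
      rw [← hC₁] at e2
      simp only [List.length_append, List.length_singleton] at e1
      have hplay : play C (Move.relocate s t :: ms') = play C₂ ms' := by
        simp only [play, happ]
      rw [hplay]
      omega

/-- There is always a feasible move sequence. -/
lemma brp_exists_feasible (hS : 2 ≤ S) :
    ∀ (N : ℕ) (C : Config B S), (∑ t : Fin S, (C t).length) = N →
    ∃ ms : List (Move S), Feasible C ms := by
  intro N
  induction N using Nat.strong_induction_on with
  | _ N ihN =>
    intro C hN
    rcases Nat.eq_zero_or_pos N with h0 | hpos
    · subst h0
      refine ⟨[], trivial, ?_⟩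
      intro s
      rw [← List.length_eq_zero_iff]
      exact Finset.sum_eq_zero_iff.mp hN s (Finset.mem_univ s)
    · -- some stack nonempty
      have : ∃ s : Fin S, C s ≠ [] := by
        by_contra h
        push_neg at h
        have : (∑ t : Fin S, (C t).length) = 0 :=
          Finset.sum_eq_zero (fun t _ => by rw [h t]; rfl)
        omega
      obtain ⟨s₀, hs₀⟩ := this
      classical
      have hPne : (Finset.univ.filter (fun b : Fin B => ∃ s, b ∈ C s)).Nonempty := by
        obtain ⟨b, hbm⟩ := List.exists_mem_of_ne_nil _ hs₀
        exact ⟨b, Finset.mem_filter.mpr ⟨Finset.mem_univ _, s₀, hbm⟩⟩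
      set b0 := (Finset.univ.filter (fun b : Fin B => ∃ s, b ∈ C s)).min' hPne with hb0
      obtain ⟨s, hmem⟩ : ∃ s, b0 ∈ C s := by
        have := (Finset.univ.filter (fun b : Fin B => ∃ s, b ∈ C s)).min'_mem hPne
        exact (Finset.mem_filter.mp this).2
      have hmin : ∀ s' : Fin S, ∀ b' ∈ C s', b0 ≤ b' := by
        intro s' b' hb'
        exact Finset.min'_le _ _ (Finset.mem_filter.mpr ⟨Finset.mem_univ _, s', hb'⟩)
      obtain ⟨ms₁, hAE₁, hsum₁⟩ := brp_clearAbove hS b0 (C s).length C s rfl hmem hmin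
      have hlt : (∑ t : Fin S, (play C ms₁ t).length) < N := by omega
      obtain ⟨ms₂, hAE₂, hend₂⟩ := ihN _ hlt (play C ms₁) rfl
      exact ⟨ms₁ ++ ms₂, brp_allEnabled_append hAE₁ hAE₂,
        by intro s'; rw [brp_play_append]; exact hend₂ s'⟩

end BRPAux

section BRPMain

variable {B S : ℕ}

lemma brp_bp_preserved {C : Config B S} {b : Fin B} {m : Move S}
    (hE : Enabled C m) (hBP : BadlyPlaced C b)
    (hNot : ¬ RelocTypeIn MType.BG {b} C m) :
    BadlyPlaced (applyMove C m) b := by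
  obtain ⟨s, a, hab, i, j, hij, hi, hj⟩ := hBP
  have hjlen : j < (C s).length := (List.getElem?_eq_some_iff.mp hj).1
  have hamem : a ∈ C s := by
    obtain ⟨hlt, he⟩ := List.getElem?_eq_some_iff.mp hi
    rw [← he]; exact List.getElem_mem _
  cases m with
  | retrieve s₀ =>
    obtain ⟨bt, hbt, hmin⟩ := hE
    show BadlyPlaced (Function.update C s₀ (C s₀).dropLast) b
    by_cases hss : s₀ = s
    · subst hss
      have hjne : j ≠ (C s₀).length - 1 := by
        intro hje
        have hbeq : (C s₀).getLast? = some b := by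
          rw [List.getLast?_eq_getElem?, ← hje]; exact hj
        rw [hbt] at hbeq
        have : bt = b := Option.some_inj.mp hbeq
        subst this
        exact absurd hab (not_lt.mpr (hmin s₀ a hamem))
      have hjlt : j < (C s₀).length - 1 := by omega
      refine ⟨s₀, a, hab, i, j, hij, ?_, ?_⟩ <;>
        rw [Function.update_self, List.dropLast_eq_take, List.getElem?_take,
          if_pos (by omega)]
      · exact hi
      · exact hj
    · refine ⟨s, a, hab, i, j, hij, ?_, ?_⟩ <;>
        rw [Function.update_of_ne (fun h => hss h.symm)]
      · exact hi
      · exact hj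
  | relocate src dst =>
    obtain ⟨hsd, hnil⟩ := hE
    obtain ⟨bt, hbt⟩ := Option.isSome_iff_exists.mp (List.getLast?_isSome.mpr hnil)
    set C₁ := Function.update C src (C src).dropLast with hC₁
    have happ : applyMove C (Move.relocate src dst)
        = Function.update C₁ dst (C₁ dst ++ [bt]) := by
      simp only [applyMove, hbt]
      rfl
    by_cases hbtb : bt = b
    · subst hbtb
      have hmoved : MovedBlock C (Move.relocate src dst) bt :=
        ⟨src, dst, rfl, hsd, hbt⟩
      by_contra hno
      exact hNot ⟨bt, Set.mem_singleton bt, hmoved,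
        ⟨⟨s, a, hab, i, j, hij, hi, hj⟩, hno⟩⟩
    · rw [happ]
      by_cases h1 : s = dst
      · subst h1
        have hC₁d : C₁ s = C s := Function.update_of_ne (fun h => hsd h.symm) _ _
        refine ⟨s, a, hab, i, j, hij, ?_, ?_⟩ <;>
          rw [Function.update_self, hC₁d, List.getElem?_append,
            if_pos (by omega)]
        · exact hi
        · exact hj
      · by_cases h2 : s = src
        · subst h2
          have hjne : j ≠ (C s).length - 1 := by
            intro hje
            have hbeq : (C s).getLast? = some b := by
              rw [List.getLast?_eq_getElem?, ← hje]; exact hj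
            rw [hbt] at hbeq
            exact hbtb (Option.some_inj.mp hbeq)
          refine ⟨s, a, hab, i, j, hij, ?_, ?_⟩ <;>
            rw [Function.update_of_ne h1, hC₁, Function.update_self,
              List.dropLast_eq_take, List.getElem?_take, if_pos (by omega)]
          · exact hi
          · exact hj
        · refine ⟨s, a, hab, i, j, hij, ?_, ?_⟩ <;>
            rw [Function.update_of_ne h1, hC₁, Function.update_of_ne h2]
          · exact hi
          · exact hj

lemma brp_count_pos {b : Fin B} :
    ∀ (ms : List (Move S)) (C : Config B S), BadlyPlaced C b →
    AllEnabled C ms → (∀ s, play C ms s = []) →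
    1 ≤ countMoves (RelocTypeIn MType.BG {b}) C ms := by
  intro ms
  induction ms with
  | nil =>
    intro C hBP _ hend
    obtain ⟨s, a, hab, i, j, hij, hi, hj⟩ := hBP
    have : play C [] = C := rfl
    rw [this] at hend
    rw [hend s] at hj
    simp at hj
  | cons m ms ih =>
    intro C hBP hAE hend
    by_cases hP : RelocTypeIn MType.BG {b} C m
    · rw [countMoves, if_pos hP]
      omega
    · rw [countMoves, if_neg hP]
      have := ih (applyMove C m) (brp_bp_preserved hAE.1 hBP hP) hAE.2
        (fun s => hend s)
      omega

end BRPMain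

/-- Property 1: if `b` is badly placed in `C`, every feasible move
sequence contains at least one BG relocation of `b`; that is, `f_BG({b}) ≥ 1`. -/
theorem brp_property1 {B S : ℕ} (hS : 2 ≤ S) (hB : 1 ≤ B)
    (C : Config B S) (hC : IsConfig C) (b : Fin B) (hb : BadlyPlaced C b) :
    (∀ ms, Feasible C ms → 1 ≤ countMoves (RelocTypeIn MType.BG {b}) C ms) ∧
    1 ≤ fTyp C MType.BG {b} := by
  have hpart1 : ∀ ms, Feasible C ms → 1 ≤ countMoves (RelocTypeIn MType.BG {b}) C ms :=
    fun ms h => brp_count_pos ms C hb h.1 h.2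
  refine ⟨hpart1, ?_⟩
  obtain ⟨ms, hms⟩ := brp_exists_feasible hS _ C rfl
  have hne : {n | ∃ ms, Feasible C ms ∧ countMoves (RelocTypeIn MType.BG {b}) C ms = n}.Nonempty :=
    ⟨_, ms, hms, rfl⟩
  exact le_csInf hne (by rintro n ⟨ms', hfe, rfl⟩; exact hpart1 ms' hfe)
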